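/- Let P, Q ∈ ℤ with P·Q = 0, let p be a prime, and let r ≥ 1 be an integer. Then: (1) if P ≠ 0, Q = 0, and p ∤ P, then L(P,Q,p^{−r}) = {0}; (2) if P ≠ 0, Q = 0, and p ∣ P, then L(P,Q,p^{−r}) = S_{⌈r/ν_p(P)⌉ + 1}; (3) if P = 0, Q ≠ 0, and p ∤ Q, then L(P,Q,p^{−r}) = ⟨2⟩; (4) if P = 0, Q ≠ 0, and p ∣ Q, then L(P,Q,p^{−r}) = ⟨2, 2⌈r/ν_p(Q)⌉ + 1⟩; (5) if P = Q = 0, then L(P,Q,p^{−r}) = S₂ = ℕ \ {1}. -/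

import Mathlib

/-- The Lucas sequence `U_n(P,Q)`: `U_0 = 0`, `U_1 = 1`,
`U_{n+2} = P·U_{n+1} − Q·U_n`. -/
def lucasU (P Q : ℤ) : ℕ → ℤ
  | 0 => 0
  | 1 => 1
  | n + 2 => P * lucasU P Q (n + 1) - Q * lucasU P Q n

/-- The Lucas semigroup `L(P,Q,R) = {n ∈ ℕ : U_n(P,Q)·R ∈ ℤ}`. -/
def lucasSG (P Q : ℤ) (R : ℚ) : Set ℕ :=
  {n : ℕ | ∃ k : ℤ, (lucasU P Q n : ℚ) * R = (k : ℚ)}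

/-- The local Lucas semigroup `L(P,Q,p^{-r}) = {n ∈ ℕ : ν_p(U_n) ≥ r}`,
equivalently the set of `n` with `U_n · p^{-r} ∈ ℤ`. -/
def localLucasSG (P Q : ℤ) (p : ℕ) (r : ℤ) : Set ℕ :=
  lucasSG P Q ((p : ℚ) ^ (-r))

/-- Ceiling of the quotient `r / a` of natural numbers. -/
def ceilDivNat (r a : ℕ) : ℕ := (⌈(r : ℚ) / (a : ℚ)⌉).toNat

/-- The ordinary ("tail") semigroup `S_m = {0} ∪ {n ∈ ℕ : n ≥ m}`. -/
def tailSG (m : ℕ) : Set ℕ := {n : ℕ | n = 0 ∨ m ≤ n}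

lemma mem_localLucasSG_iff (P Q : ℤ) (p : ℕ) (hp : p.Prime) (r : ℕ) (n : ℕ) :
    n ∈ localLucasSG P Q p (r : ℤ) ↔ (p : ℤ) ^ r ∣ lucasU P Q n := by
  have hp0 : (p : ℚ) ^ r ≠ 0 := pow_ne_zero _ (by exact_mod_cast hp.ne_zero)
  unfold localLucasSG lucasSG
  simp only [Set.mem_setOf_eq, zpow_neg, zpow_natCast]
  constructor
  · rintro ⟨k, hk⟩
    refine ⟨k, ?_⟩
    have : (lucasU P Q n : ℚ) = (p : ℚ) ^ r * k := by
      field_simp at hk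
      linarith [hk]
    exact_mod_cast this
  · rintro ⟨k, hk⟩
    refine ⟨k, ?_⟩
    rw [hk]
    push_cast
    field_simp

lemma lucasU_Q_zero (P : ℤ) : ∀ n, lucasU P 0 (n + 1) = P ^ n
  | 0 => by simp [lucasU]
  | n + 1 => by
      show P * lucasU P 0 (n + 1) - 0 * lucasU P 0 n = P ^ (n + 1)
      rw [lucasU_Q_zero P n]; ring

lemma lucasU_P_zero (Q : ℤ) :
    ∀ k, lucasU 0 Q (2 * k) = 0 ∧ lucasU 0 Q (2 * k + 1) = (-Q) ^ k
  | 0 => ⟨by simp [lucasU], by simp [lucasU]⟩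
  | k + 1 => by
      obtain ⟨h0, h1⟩ := lucasU_P_zero Q k
      constructor
      · show lucasU 0 Q (2 * k + 2) = 0
        show 0 * lucasU 0 Q (2 * k + 1) - Q * lucasU 0 Q (2 * k) = 0
        rw [h0]; ring
      · show lucasU 0 Q (2 * k + 3) = (-Q) ^ (k + 1)
        show 0 * lucasU 0 Q (2 * k + 2) - Q * lucasU 0 Q (2 * k + 1) = (-Q) ^ (k + 1)
        rw [h1]; ring

lemma ceilDivNat_le_iff (r v k : ℕ) (hv : 1 ≤ v) :
    ceilDivNat r v ≤ k ↔ r ≤ k * v := by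
  have hv0 : (0 : ℚ) < v := by exact_mod_cast hv
  unfold ceilDivNat
  rw [Int.toNat_le, Int.ceil_le, div_le_iff₀ hv0]
  exact_mod_cast Iff.rfl

lemma one_le_ceilDivNat (r v : ℕ) (hv : 1 ≤ v) (hr : 1 ≤ r) : 1 ≤ ceilDivNat r v := by
  by_contra h
  push_neg at h
  have := (ceilDivNat_le_iff r v 0 hv).mp (by omega)
  omega

lemma padicValInt_pow' (p : ℕ) (hp : p.Prime) (a : ℤ) (ha : a ≠ 0) (m : ℕ) :
    padicValInt p (a ^ m) = m * padicValInt p a := by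
  haveI := Fact.mk hp
  unfold padicValInt
  rw [Int.natAbs_pow]
  exact padicValNat.pow _ m

lemma mem_closure_two_iff (n : ℕ) :
    n ∈ AddSubmonoid.closure ({2} : Set ℕ) ↔ Even n := by
  rw [AddSubmonoid.mem_closure_singleton]
  constructor
  · rintro ⟨m, rfl⟩
    exact ⟨m, by rw [smul_eq_mul]; ring⟩
  · rintro ⟨m, rfl⟩
    exact ⟨m, by rw [smul_eq_mul]; ring⟩

lemma mem_closure_two_odd_iff (d n : ℕ) (hd : Odd d) :
    n ∈ AddSubmonoid.closure ({2, d} : Set ℕ) ↔ Even n ∨ d ≤ n := by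
  constructor
  · intro h
    induction h using AddSubmonoid.closure_induction with
    | mem x hx =>
        rcases hx with rfl | hx
        · left; exact even_two
        · right; simp only [Set.mem_singleton_iff] at hx; omega
    | zero => left; exact Even.zero
    | add a b _ _ ha hb =>
        rcases ha with ha | ha
        · rcases hb with hb | hb
          · left; exact ha.add hb
          · right; omega
        · right; omega
  · intro h
    have h2 : (2 : ℕ) ∈ AddSubmonoid.closure ({2, d} : Set ℕ) :=
      AddSubmonoid.subset_closure (by simp)
    have hdm : d ∈ AddSubmonoid.closure ({2, d} : Set ℕ) :=
      AddSubmonoid.subset_closure (by simp)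
    have heven : ∀ m : ℕ, Even m → m ∈ AddSubmonoid.closure ({2, d} : Set ℕ) := by
      rintro m ⟨j, rfl⟩
      have hjj : j + j = j • 2 := by rw [smul_eq_mul]; ring
      rw [hjj]
      exact AddSubmonoid.nsmul_mem _ h2 j
    rcases h with h | h
    · exact heven n h
    · rcases Nat.even_or_odd n with he | ho
      · exact heven n he
      · have hnd : n = d + (n - d) := by omega
        rw [hnd]
        refine AddSubmonoid.add_mem _ hdm (heven _ ?_)
        rcases ho with ⟨j, hj⟩
        rcases hd with ⟨i, hi⟩
        exact ⟨j - i, by omega⟩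

/-- Classification of the local Lucas semigroups `L(P,Q,p^{-r})` when `PQ = 0`. -/
theorem localLucasSG_of_PQ_eq_zero (P Q : ℤ) (hPQ : P * Q = 0) (p : ℕ)
    (hp : p.Prime) (r : ℕ) (hr : 1 ≤ r) :
    (P ≠ 0 → Q = 0 → ¬ (p : ℤ) ∣ P →
      localLucasSG P Q p (r : ℤ) = {0}) ∧
    (P ≠ 0 → Q = 0 → (p : ℤ) ∣ P →
      localLucasSG P Q p (r : ℤ) = tailSG (ceilDivNat r (padicValInt p P) + 1)) ∧
    (P = 0 → Q ≠ 0 → ¬ (p : ℤ) ∣ Q →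
      localLucasSG P Q p (r : ℤ) = (AddSubmonoid.closure ({2} : Set ℕ) : Set ℕ)) ∧
    (P = 0 → Q ≠ 0 → (p : ℤ) ∣ Q →
      localLucasSG P Q p (r : ℤ) =
        (AddSubmonoid.closure ({2, 2 * ceilDivNat r (padicValInt p Q) + 1} : Set ℕ) : Set ℕ)) ∧
    (P = 0 → Q = 0 → localLucasSG P Q p (r : ℤ) = tailSG 2) := by
  have hpI : Prime (p : ℤ) := Nat.prime_iff_prime_int.1 hp
  haveI := Fact.mk hp
  refine ⟨?_, ?_, ?_, ?_, ?_⟩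
  · -- case 1
    intro hP hQ hpP
    subst hQ
    ext n
    rw [Set.mem_singleton_iff, mem_localLucasSG_iff P 0 p hp r n]
    cases n with
    | zero => simp [lucasU]
    | succ m =>
        rw [lucasU_Q_zero]
        constructor
        · intro h
          exfalso
          have h1 : (p : ℤ) ∣ P ^ m := dvd_trans (dvd_pow_self _ (by omega)) h
          exact hpP (hpI.dvd_of_dvd_pow h1)
        · intro h; omega
  · -- case 2
    intro hP hQ hpP
    subst hQ
    have hv : 1 ≤ padicValInt p P := by
      have := (padicValInt_dvd_iff 1 P).mp (by simpa using hpP)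
      rcases this with h | h
      · exact absurd h hP
      · exact h
    ext n
    rw [mem_localLucasSG_iff P 0 p hp r n]
    cases n with
    | zero => simp [lucasU, tailSG]
    | succ m =>
        rw [lucasU_Q_zero, padicValInt_dvd_iff, padicValInt_pow' p hp P hP]
        simp only [tailSG, Set.mem_setOf_eq]
        have hx : P ^ m ≠ 0 := pow_ne_zero _ hP
        have := ceilDivNat_le_iff r (padicValInt p P) m hv
        constructor
        · rintro (h | h)
          · exact absurd h hx
          · right; omega
        · rintro (h | h)
          · omega
          · right; omega
  · -- case 3
    intro hP hQ hpQ
    subst hP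
    ext n
    rw [mem_localLucasSG_iff 0 Q p hp r n, SetLike.mem_coe, mem_closure_two_iff]
    rcases Nat.even_or_odd n with he | ho
    · obtain ⟨k, hk⟩ := he
      have hn : n = 2 * k := by omega
      rw [hn, (lucasU_P_zero Q k).1]
      simp only [dvd_zero, true_iff]
      exact ⟨k, by omega⟩
    · obtain ⟨k, hk⟩ := ho
      rw [hk, (lucasU_P_zero Q k).2]
      constructor
      · intro h
        exfalso
        have h1 : (p : ℤ) ∣ (-Q) ^ k := dvd_trans (dvd_pow_self _ (by omega)) h
        exact hpQ ((dvd_neg).mp (hpI.dvd_of_dvd_pow h1))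
      · rintro ⟨j, hj⟩
        omega
  · -- case 4
    intro hP hQ hpQ
    subst hP
    have hv : 1 ≤ padicValInt p Q := by
      have := (padicValInt_dvd_iff 1 Q).mp (by simpa using hpQ)
      rcases this with h | h
      · exact absurd h hQ
      · exact h
    set c := ceilDivNat r (padicValInt p Q) with hc
    have hc1 : 1 ≤ c := one_le_ceilDivNat r _ hv hr
    ext n
    rw [mem_localLucasSG_iff 0 Q p hp r n, SetLike.mem_coe,
      mem_closure_two_odd_iff (2 * c + 1) n ⟨c, rfl⟩]
    rcases Nat.even_or_odd n with he | ho
    · obtain ⟨k, hk⟩ := he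
      have hn : n = 2 * k := by omega
      rw [hn, (lucasU_P_zero Q k).1]
      simp only [dvd_zero, true_iff]
      left; exact ⟨k, by omega⟩
    · obtain ⟨k, hk⟩ := ho
      rw [hk, (lucasU_P_zero Q k).2, padicValInt_dvd_iff,
        padicValInt_pow' p hp (-Q) (by simpa using hQ)]
      have hQv : padicValInt p (-Q) = padicValInt p Q := by
        unfold padicValInt; rw [Int.natAbs_neg]
      rw [hQv]
      have hx : (-Q) ^ k ≠ 0 := pow_ne_zero _ (by simpa using hQ)
      have hck := ceilDivNat_le_iff r (padicValInt p Q) k hv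
      constructor
      · rintro (h | h)
        · exact absurd h hx
        · right; omega
      · rintro (h | h)
        · exfalso; rcases h with ⟨j, hj⟩; omega
        · right; omega
  · -- case 5
    intro hP hQ
    subst hP; subst hQ
    ext n
    rw [mem_localLucasSG_iff 0 0 p hp r n]
    simp only [tailSG, Set.mem_setOf_eq]
    match n with
    | 0 => simp [lucasU]
    | 1 =>
        simp only [lucasU]
        constructor
        · intro h
          exfalso
          have h1 : (p : ℤ) ^ r ≤ 1 := Int.le_of_dvd one_pos h
          have h2 : (1 : ℤ) ≤ p := by exact_mod_cast hp.one_lt.le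
          have h3 : (p : ℤ) ^ 1 ≤ (p : ℤ) ^ r := pow_le_pow_right₀ h2 hr
          have h4 : (2 : ℤ) ≤ p := by exact_mod_cast hp.two_le
          simp only [pow_one] at h3
          linarith
        · omega
    | (m + 2) =>
        show (p : ℤ) ^ r ∣ 0 * lucasU 0 0 (m + 1) - 0 * lucasU 0 0 m ↔ _
        simp
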